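/- Let X = [−1,1]³ ⊂ ℝ³, q = 2, and V1(x) = x1² + x2² + x3². Then J_X[V1] = 1/3; equivalently, (1/8) ∫_{[−1,1]³} (x1 sin x3 − x2 cos x3)² / (x1² + x2² + x3²) dx = 1/3. -/

import Mathlib

open Real MeasureTheory

/-- The vector field `f₁(x) = (cos x₃, sin x₃, 0)ᵀ` of the unicycle model,
as an element of Euclidean `ℝ³` (it depends only on `x₃`). -/
noncomputable def f1 (x3 : ℝ) : EuclideanSpace ℝ (Fin 3) :=
  (WithLp.equiv 2 (Fin 3 → ℝ)).symm ![Real.cos x3, Real.sin x3, 0]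

/-- The vector field `f₂(x) = (0, 0, 1)ᵀ` of the unicycle model. -/
noncomputable def f2 : EuclideanSpace ℝ (Fin 3) :=
  (WithLp.equiv 2 (Fin 3 → ℝ)).symm ![0, 0, 1]

/-- The admissibility measure
`J_X[V] = (1/μ(X)) ∫_X inf_{u∈ℝ²} ‖u₁ f₁(x) + u₂ f₂(x) + ∇V(x)ᵀ‖^q / ‖∇V(x)‖^q dx`. -/
noncomputable def J (X : Set (EuclideanSpace ℝ (Fin 3))) (q : ℝ)
    (V : EuclideanSpace ℝ (Fin 3) → ℝ) : ℝ :=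
  ((volume X).toReal)⁻¹ *
    ∫ x in X,
      (⨅ u : ℝ × ℝ, ‖u.1 • f1 (x 2) + u.2 • f2 + gradient V x‖) ^ q /
        ‖gradient V x‖ ^ q

open scoped ENNReal

abbrev E3 := EuclideanSpace ℝ (Fin 3)

lemma norm_comp (w : E3) : ‖w‖ = Real.sqrt ((w 0)^2 + (w 1)^2 + (w 2)^2) := by
  rw [EuclideanSpace.norm_eq]
  simp [Fin.sum_univ_three, sq_abs]

lemma comp_expand (t : ℝ) (p : E3) (a b : ℝ) (i : Fin 3) :
    (a • f1 t + b • f2 + p) i = a * (f1 t i) + b * (f2 i) + p i := by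
  simp [PiLp.add_apply, PiLp.smul_apply, smul_eq_mul]

lemma inf_eq (t : ℝ) (p : E3) :
    (⨅ u : ℝ × ℝ, ‖u.1 • f1 t + u.2 • f2 + p‖) = |p 0 * Real.sin t - p 1 * Real.cos t| := by
  have hsc := Real.sin_sq_add_cos_sq t
  have hf10 : f1 t 0 = Real.cos t := by simp [f1]
  have hf11 : f1 t 1 = Real.sin t := by simp [f1]
  have hf12 : f1 t 2 = 0 := by simp [f1]
  have hf20 : f2 0 = 0 := by simp [f2]
  have hf21 : f2 1 = 0 := by simp [f2]
  have hf22 : f2 2 = 1 := by simp [f2]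
  apply le_antisymm
  · have := ciInf_le (f := fun u : ℝ × ℝ => ‖u.1 • f1 t + u.2 • f2 + p‖)
      ⟨0, by rintro _ ⟨u, rfl⟩; positivity⟩ (-(p 0 * Real.cos t + p 1 * Real.sin t), -(p 2))
    refine this.trans_eq ?_
    rw [norm_comp]
    simp only [comp_expand, hf10, hf11, hf12, hf20, hf21, hf22]
    rw [show (-(p 0 * Real.cos t + p 1 * Real.sin t) * Real.cos t + -(p 2) * 0 + p 0)^2 +
        (-(p 0 * Real.cos t + p 1 * Real.sin t) * Real.sin t + -(p 2) * 0 + p 1)^2 +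
        (-(p 0 * Real.cos t + p 1 * Real.sin t) * 0 + -(p 2) * 1 + p 2)^2
        = (p 0 * Real.sin t - p 1 * Real.cos t)^2 by
      linear_combination ((p 0 * Real.cos t + p 1 * Real.sin t)^2 - (p 0)^2 - (p 1)^2) * hsc]
    exact Real.sqrt_sq_eq_abs _
  · refine le_ciInf fun u => ?_
    rw [norm_comp]
    simp only [comp_expand, hf10, hf11, hf12, hf20, hf21, hf22]
    rw [← Real.sqrt_sq_eq_abs]
    apply Real.sqrt_le_sqrt
    nlinarith [sq_nonneg (u.1 * Real.sin t + u.2 * 0 + p 1), sq_nonneg (u.1 * 0 + u.2 * 1 + p 2),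
      sq_nonneg (Real.sin t * (u.1 * Real.cos t + u.2 * 0 + p 0) - Real.cos t * (u.1 * Real.sin t + u.2 * 0 + p 1)),
      sq_nonneg (Real.cos t * (u.1 * Real.cos t + u.2 * 0 + p 0) + Real.sin t * (u.1 * Real.sin t + u.2 * 0 + p 1))]


lemma grad_eq (x : E3) :
    gradient (fun x : E3 => (x 0) ^ 2 + (x 1) ^ 2 + (x 2) ^ 2) x = (2:ℝ) • x := by
  have hfun : (fun x : E3 => (x 0) ^ 2 + (x 1) ^ 2 + (x 2) ^ 2)
      = fun x : E3 => (inner ℝ x x : ℝ) := by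
    funext y
    simp [PiLp.inner_apply, RCLike.inner_apply, Fin.sum_univ_three]
    rw [norm_comp, Real.sq_sqrt (by positivity)]
  rw [hfun]
  have h : HasGradientAt (fun y : E3 => (inner ℝ y y : ℝ)) ((2:ℝ) • x) x := by
    rw [hasGradientAt_iff_hasFDerivAt]
    have h := (hasFDerivAt_id (𝕜 := ℝ) x).inner ℝ (hasFDerivAt_id x)
    refine h.congr_fderiv ?_
    ext p
    simp [fderivInnerCLM_apply, InnerProductSpace.toDual_apply_apply, real_inner_smul_left,
      real_inner_comm, two_mul, mul_comm]
  exact h.gradient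



def Cb : Set E3 := {x : E3 | ∀ i, x i ∈ Set.Icc (-1 : ℝ) 1}

lemma meas_proj (i : Fin 3) : Measurable fun x : E3 => x i :=
  (EuclideanSpace.proj (𝕜 := ℝ) i).continuous.measurable

lemma Cb_meas : MeasurableSet Cb := by
  have : Cb = ⋂ i, (fun x : E3 => x i) ⁻¹' Set.Icc (-1 : ℝ) 1 := by
    ext x; simp [Cb, Set.mem_iInter]
  rw [this]
  exact MeasurableSet.iInter fun i => measurableSet_Icc.preimage (meas_proj i)

lemma Cb_vol : volume Cb = 8 := by
  have h := (EuclideanSpace.volume_preserving_symm_measurableEquiv_toLp (Fin 3)).symm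
  have hpre : (MeasurableEquiv.toLp 2 (Fin 3 → ℝ)).symm.symm ⁻¹' Cb
      = Set.pi Set.univ (fun _ : Fin 3 => Set.Icc (-1:ℝ) 1) := by
    ext y
    simp [Cb, MeasurableEquiv.symm_symm, MeasurableEquiv.coe_toLp, Set.mem_pi, Pi.le_def, forall_and]
  rw [← h.measure_preimage Cb_meas.nullMeasurableSet, hpre, volume_pi_pi]
  simp [Real.volume_Icc]
  rw [show ((1:ℝ) + 1) = 2 by norm_num, ENNReal.ofReal_ofNat]
  norm_num

noncomputable def rr (x : E3) : ℝ := (x 0) ^ 2 + (x 1) ^ 2 + (x 2) ^ 2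
noncomputable def gg (x : E3) : ℝ := (x 0 * Real.sin (x 2) - x 1 * Real.cos (x 2)) ^ 2 / rr x
noncomputable def hh (x : E3) : ℝ := (x 0 * Real.cos (x 2) + x 1 * Real.sin (x 2)) ^ 2 / rr x
noncomputable def kk (x : E3) : ℝ := (x 2) ^ 2 / rr x
noncomputable def k0 (x : E3) : ℝ := (x 0) ^ 2 / rr x
noncomputable def k1 (x : E3) : ℝ := (x 1) ^ 2 / rr x

lemma hyper_null : volume {x : E3 | x 0 = 0} = 0 := by
  have h := (EuclideanSpace.volume_preserving_symm_measurableEquiv_toLp (Fin 3)).symm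
  have hmeas : MeasurableSet {x : E3 | x 0 = 0} :=
    (measurableSet_singleton (0:ℝ)).preimage (meas_proj 0)
  have hpre : (MeasurableEquiv.toLp 2 (Fin 3 → ℝ)).symm.symm ⁻¹' {x : E3 | x 0 = 0}
      = {y : Fin 3 → ℝ | y 0 = 0} := by
    ext y; simp [MeasurableEquiv.symm_symm, MeasurableEquiv.coe_toLp]
  rw [← h.measure_preimage hmeas.nullMeasurableSet, hpre]
  rw [MeasureTheory.volume_pi]
  exact MeasureTheory.Measure.pi_hyperplane (fun _ => volume) 0 0

lemma ae_rr_ne : ∀ᵐ x : E3, rr x ≠ 0 := by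
  have hsub : {x : E3 | rr x = 0} ⊆ {x : E3 | x 0 = 0} := by
    intro x hx
    simp only [rr, Set.mem_setOf_eq] at hx
    have h0 : (x 0) ^ 2 = 0 := by
      nlinarith [sq_nonneg (x 0), sq_nonneg (x 1), sq_nonneg (x 2)]
    simpa using pow_eq_zero_iff two_ne_zero |>.mp h0
  have : volume {x : E3 | rr x = 0} = 0 := measure_mono_null hsub hyper_null
  rw [Filter.eventually_iff]
  rw [mem_ae_iff]
  convert this using 2
  ext x; simp

lemma integOn {f : E3 → ℝ} (hm : Measurable f) (hb : ∀ x, ‖f x‖ ≤ 1) : IntegrableOn f Cb := by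
  have : Fact (volume Cb < ⊤) := ⟨by rw [Cb_vol]; norm_num⟩
  exact (integrable_const (1:ℝ)).mono' hm.aestronglyMeasurable (ae_of_all _ hb)

lemma transfer (e : E3 ≃ₗᵢ[ℝ] E3) (he : ∀ x, e x ∈ Cb ↔ x ∈ Cb) (f : E3 → ℝ) :
    ∫ x in Cb, f (e x) = ∫ x in Cb, f x := by
  have h := e.measurePreserving.setIntegral_preimage_emb
    e.toHomeomorph.measurableEmbedding f Cb
  rwa [show ⇑e ⁻¹' Cb = Cb from Set.ext he] at h

noncomputable def pIso (e : Fin 3 ≃ Fin 3) : E3 ≃ₗᵢ[ℝ] E3 :=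
  LinearIsometryEquiv.piLpCongrLeft 2 ℝ ℝ e

lemma pIso_apply (e : Fin 3 ≃ Fin 3) (x : E3) (i : Fin 3) : pIso e x i = x (e.symm i) := rfl

noncomputable def ψ : E3 ≃ₗᵢ[ℝ] E3 := (pIso (Equiv.swap 0 1)).trans (LinearIsometryEquiv.neg ℝ)

lemma ψ_apply (x : E3) (i : Fin 3) : ψ x i = -(x ((Equiv.swap 0 1) i)) := by
  simp [ψ, LinearIsometryEquiv.trans_apply, pIso_apply]

lemma mem_Cb_iff (x : E3) : x ∈ Cb ↔ ∀ i, |x i| ≤ 1 := by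
  simp [Cb, Set.mem_Icc, abs_le]

lemma mem_Cb_perm (e : Fin 3 ≃ Fin 3) (x : E3) : pIso e x ∈ Cb ↔ x ∈ Cb := by
  simp only [mem_Cb_iff, pIso_apply]
  constructor
  · intro h i; have := h (e i); rwa [Equiv.symm_apply_apply] at this
  · intro h i; exact h _

lemma mem_Cb_ψ (x : E3) : ψ x ∈ Cb ↔ x ∈ Cb := by
  simp only [mem_Cb_iff, ψ_apply, abs_neg]
  constructor
  · intro h i
    have := h ((Equiv.swap 0 1) i)
    rwa [Equiv.swap_apply_self] at this
  · intro h i; exact h _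

lemma gg_psi (x : E3) : gg (ψ x) = hh x := by
  have h0 : ψ x 0 = -(x 1) := by rw [ψ_apply, Equiv.swap_apply_left]
  have h1 : ψ x 1 = -(x 0) := by rw [ψ_apply, Equiv.swap_apply_right]
  have h2 : ψ x 2 = -(x 2) := by
    rw [ψ_apply, Equiv.swap_apply_of_ne_of_ne] <;> decide
  simp only [gg, hh, rr, h0, h1, h2, Real.sin_neg, Real.cos_neg, neg_sq]
  ring_nf

lemma kk_p02 (x : E3) : kk (pIso (Equiv.swap 0 2) x) = k0 x := by
  have h0 : pIso (Equiv.swap 0 2) x 0 = x 2 := by rw [pIso_apply, Equiv.symm_swap, Equiv.swap_apply_left]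
  have h1 : pIso (Equiv.swap 0 2) x 1 = x 1 := by
    rw [pIso_apply, Equiv.symm_swap, Equiv.swap_apply_of_ne_of_ne] <;> decide
  have h2 : pIso (Equiv.swap 0 2) x 2 = x 0 := by rw [pIso_apply, Equiv.symm_swap, Equiv.swap_apply_right]
  simp only [kk, k0, rr, h0, h1, h2]
  ring_nf

lemma kk_p12 (x : E3) : kk (pIso (Equiv.swap 1 2) x) = k1 x := by
  have h0 : pIso (Equiv.swap 1 2) x 0 = x 0 := by
    rw [pIso_apply, Equiv.symm_swap, Equiv.swap_apply_of_ne_of_ne] <;> decide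
  have h1 : pIso (Equiv.swap 1 2) x 1 = x 2 := by rw [pIso_apply, Equiv.symm_swap, Equiv.swap_apply_left]
  have h2 : pIso (Equiv.swap 1 2) x 2 = x 1 := by rw [pIso_apply, Equiv.symm_swap, Equiv.swap_apply_right]
  simp only [kk, k1, rr, h0, h1, h2]
  ring_nf

lemma rr_nonneg (x : E3) : 0 ≤ rr x := by unfold rr; positivity

lemma meas_rr : Measurable rr := by
  unfold rr
  exact (((meas_proj 0).pow_const 2).add ((meas_proj 1).pow_const 2)).add
    ((meas_proj 2).pow_const 2)

lemma meas_gg : Measurable gg := by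
  unfold gg
  exact Measurable.div
    ((((meas_proj 0).mul (Real.measurable_sin.comp (meas_proj 2))).sub
      ((meas_proj 1).mul (Real.measurable_cos.comp (meas_proj 2)))).pow_const 2) meas_rr

lemma meas_hh : Measurable hh := by
  unfold hh
  exact Measurable.div
    ((((meas_proj 0).mul (Real.measurable_cos.comp (meas_proj 2))).add
      ((meas_proj 1).mul (Real.measurable_sin.comp (meas_proj 2)))).pow_const 2) meas_rr

lemma meas_kk : Measurable kk := Measurable.div ((meas_proj 2).pow_const 2) meas_rr
lemma meas_k0 : Measurable k0 := Measurable.div ((meas_proj 0).pow_const 2) meas_rr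
lemma meas_k1 : Measurable k1 := Measurable.div ((meas_proj 1).pow_const 2) meas_rr

lemma bnd_aux {n : ℝ} (x : E3) (hn : 0 ≤ n) (h : n ≤ rr x) : ‖n / rr x‖ ≤ 1 := by
  rw [Real.norm_eq_abs, abs_of_nonneg (div_nonneg hn (rr_nonneg x))]
  exact div_le_one_of_le₀ h (rr_nonneg x)

lemma bnd_gg (x : E3) : ‖gg x‖ ≤ 1 := by
  refine bnd_aux x (sq_nonneg _) ?_
  unfold rr
  nlinarith [Real.sin_sq_add_cos_sq (x 2), sq_nonneg (x 2),
    sq_nonneg (x 0 * Real.cos (x 2) + x 1 * Real.sin (x 2))]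

lemma bnd_hh (x : E3) : ‖hh x‖ ≤ 1 := by
  refine bnd_aux x (sq_nonneg _) ?_
  unfold rr
  nlinarith [Real.sin_sq_add_cos_sq (x 2), sq_nonneg (x 2),
    sq_nonneg (x 0 * Real.sin (x 2) - x 1 * Real.cos (x 2))]

lemma bnd_kk (x : E3) : ‖kk x‖ ≤ 1 := by
  refine bnd_aux x (sq_nonneg _) ?_; unfold rr; nlinarith [sq_nonneg (x 0), sq_nonneg (x 1)]
lemma bnd_k0 (x : E3) : ‖k0 x‖ ≤ 1 := by
  refine bnd_aux x (sq_nonneg _) ?_; unfold rr; nlinarith [sq_nonneg (x 2), sq_nonneg (x 1)]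
lemma bnd_k1 (x : E3) : ‖k1 x‖ ≤ 1 := by
  refine bnd_aux x (sq_nonneg _) ?_; unfold rr; nlinarith [sq_nonneg (x 0), sq_nonneg (x 2)]

lemma int_one : ∫ _x in Cb, (1:ℝ) = 8 := by
  rw [setIntegral_const, measureReal_def, Cb_vol]
  norm_num

lemma sum_ghk : (∫ x in Cb, gg x) + (∫ x in Cb, hh x) + (∫ x in Cb, kk x) = 8 := by
  have h1 : ∫ x in Cb, (gg x + hh x + kk x) = ∫ _x in Cb, (1:ℝ) := by
    refine integral_congr_ae (ae_restrict_of_ae ?_)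
    filter_upwards [ae_rr_ne] with x hx
    simp only [gg, hh, kk]
    rw [← add_div, ← add_div,
      show (x 0 * Real.sin (x 2) - x 1 * Real.cos (x 2)) ^ 2
          + (x 0 * Real.cos (x 2) + x 1 * Real.sin (x 2)) ^ 2 + (x 2) ^ 2 = rr x by
        unfold rr; linear_combination ((x 0)^2 + (x 1)^2) * Real.sin_sq_add_cos_sq (x 2),
      div_self hx]
  rw [int_one] at h1
  have h2 := integral_add (μ := volume.restrict Cb)
    ((integOn meas_gg bnd_gg).add (integOn meas_hh bnd_hh)) (integOn meas_kk bnd_kk)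
  have h3 := integral_add (μ := volume.restrict Cb)
    (integOn meas_gg bnd_gg) (integOn meas_hh bnd_hh)
  simp only [Pi.add_apply] at h2 h3
  rw [h2, h3] at h1
  linarith

lemma sum_k012 : (∫ x in Cb, k0 x) + (∫ x in Cb, k1 x) + (∫ x in Cb, kk x) = 8 := by
  have h1 : ∫ x in Cb, (k0 x + k1 x + kk x) = ∫ _x in Cb, (1:ℝ) := by
    refine integral_congr_ae (ae_restrict_of_ae ?_)
    filter_upwards [ae_rr_ne] with x hx
    simp only [k0, k1, kk]
    rw [← add_div, ← add_div, show (x 0)^2 + (x 1)^2 + (x 2)^2 = rr x from rfl,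
      div_self hx]
  rw [int_one] at h1
  have h2 := integral_add (μ := volume.restrict Cb)
    ((integOn meas_k0 bnd_k0).add (integOn meas_k1 bnd_k1)) (integOn meas_kk bnd_kk)
  have h3 := integral_add (μ := volume.restrict Cb)
    (integOn meas_k0 bnd_k0) (integOn meas_k1 bnd_k1)
  simp only [Pi.add_apply] at h2 h3
  rw [h2, h3] at h1
  linarith

lemma int_k0 : (∫ x in Cb, k0 x) = ∫ x in Cb, kk x := by
  have := transfer (pIso (Equiv.swap 0 2)) (mem_Cb_perm _) kk
  rw [← this]
  exact integral_congr_ae (Filter.Eventually.of_forall fun x => (kk_p02 x).symm)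

lemma int_k1 : (∫ x in Cb, k1 x) = ∫ x in Cb, kk x := by
  have := transfer (pIso (Equiv.swap 1 2)) (mem_Cb_perm _) kk
  rw [← this]
  exact integral_congr_ae (Filter.Eventually.of_forall fun x => (kk_p12 x).symm)

lemma int_hh_eq : (∫ x in Cb, hh x) = ∫ x in Cb, gg x := by
  have := transfer ψ mem_Cb_ψ gg
  rw [← this]
  exact integral_congr_ae (Filter.Eventually.of_forall fun x => (gg_psi x).symm)

lemma int_gg : (∫ x in Cb, gg x) = 8 / 3 := by
  have hk : (∫ x in Cb, kk x) = 8 / 3 := by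
    have := sum_k012
    rw [int_k0, int_k1] at this
    linarith
  have := sum_ghk
  rw [int_hh_eq, hk] at this
  linarith


lemma norm_sq_rr (x : E3) : ‖x‖ ^ 2 = rr x := by
  rw [norm_comp, Real.sq_sqrt (by positivity)]
  rfl

lemma integrand_eq (x : E3) :
    (⨅ u : ℝ × ℝ, ‖u.1 • f1 (x 2) + u.2 • f2 +
        gradient (fun x : EuclideanSpace ℝ (Fin 3) =>
          (x 0) ^ 2 + (x 1) ^ 2 + (x 2) ^ 2) x‖) ^ (2:ℝ) /
      ‖gradient (fun x : EuclideanSpace ℝ (Fin 3) =>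
          (x 0) ^ 2 + (x 1) ^ 2 + (x 2) ^ 2) x‖ ^ (2:ℝ) = gg x := by
  have hrp : ∀ y : ℝ, y ^ (2:ℝ) = y ^ 2 := fun y => by
    rw [show (2:ℝ) = ((2:ℕ):ℝ) by norm_num, Real.rpow_natCast]
  rw [grad_eq x, inf_eq (x 2) ((2:ℝ) • x), hrp, hrp,
    show ((2:ℝ) • x) 0 = 2 * x 0 from rfl, show ((2:ℝ) • x) 1 = 2 * x 1 from rfl,
    sq_abs, norm_smul]
  rw [show (2 * x 0 * Real.sin (x 2) - 2 * x 1 * Real.cos (x 2)) ^ 2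
      = 4 * (x 0 * Real.sin (x 2) - x 1 * Real.cos (x 2)) ^ 2 by ring,
    show (‖(2:ℝ)‖ * ‖x‖) ^ 2 = 4 * ‖x‖ ^ 2 by rw [Real.norm_ofNat]; ring,
    norm_sq_rr, mul_div_mul_left _ _ (by norm_num : (4:ℝ) ≠ 0)]
  rfl

/-- For `X = [−1,1]³`, `q = 2`, and `V₁(x) = x₁² + x₂² + x₃²`, one has
`J_X[V₁] = 1/3`; equivalently,
`(1/8) ∫_{[−1,1]³} (x₁ sin x₃ − x₂ cos x₃)² / (x₁² + x₂² + x₃²) dx = 1/3`. -/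
theorem stmt14 :
    J {x : EuclideanSpace ℝ (Fin 3) | ∀ i, x i ∈ Set.Icc (-1 : ℝ) 1} 2
        (fun x => (x 0) ^ 2 + (x 1) ^ 2 + (x 2) ^ 2) = 1 / 3 ∧
    (1 / 8 : ℝ) *
        ∫ x in {x : EuclideanSpace ℝ (Fin 3) | ∀ i, x i ∈ Set.Icc (-1 : ℝ) 1},
          (x 0 * Real.sin (x 2) - x 1 * Real.cos (x 2)) ^ 2 /
            ((x 0) ^ 2 + (x 1) ^ 2 + (x 2) ^ 2) = 1 / 3 := by
  have hset : {x : EuclideanSpace ℝ (Fin 3) | ∀ i, x i ∈ Set.Icc (-1 : ℝ) 1} = Cb := rfl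
  constructor
  · rw [J, hset]
    have hint : ∫ x in Cb,
        (⨅ u : ℝ × ℝ, ‖u.1 • f1 (x 2) + u.2 • f2 +
            gradient (fun x : EuclideanSpace ℝ (Fin 3) =>
              (x 0) ^ 2 + (x 1) ^ 2 + (x 2) ^ 2) x‖) ^ (2:ℝ) /
          ‖gradient (fun x : EuclideanSpace ℝ (Fin 3) =>
              (x 0) ^ 2 + (x 1) ^ 2 + (x 2) ^ 2) x‖ ^ (2:ℝ)
        = ∫ x in Cb, gg x :=
      integral_congr_ae (Filter.Eventually.of_forall fun x => integrand_eq x)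
    rw [hint, int_gg, Cb_vol]
    norm_num
  · rw [hset]
    have : ∫ x in Cb, (x 0 * Real.sin (x 2) - x 1 * Real.cos (x 2)) ^ 2 /
        ((x 0) ^ 2 + (x 1) ^ 2 + (x 2) ^ 2) = ∫ x in Cb, gg x := rfl
    rw [this, int_gg]
    norm_num
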